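/- Fix a constant k > 0 and a function L : ℕ → ℕ with 1 ≤ L(M) ≤ M for all M and L(M) → ∞ as M → ∞. For each M, suppose on a probability space there are mutually independent real random variables Y₁,…,Y_{L(M)}, each Gaussian with mean √(k·log M / L(M)) and variance 1, and W₁,…,W_{M−L(M)}, each Gaussian with mean 0 and variance 1. Let S₁ = max_{1≤i≤M−L(M)} W_i and let B_{L(M)} = min_{1≤i≤L(M)} Y_i. If L(M)/M → 0 as M → ∞, then P[S₁ > B_{L(M)}] → 1 as M → ∞. -/

import Mathlib

open MeasureTheory ProbabilityTheory Filter
open scoped ENNReal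

lemma gaussian_Ioi_self (μ : ℝ) : gaussianReal μ 1 (Set.Ioi μ) = 1/2 := by
  set ν := gaussianReal μ 1 with hν
  have h1 : ν.map (fun x => -1 * x) = gaussianReal (-μ) 1 := by
    rw [hν, gaussianReal_map_const_mul]
    congr 1
    · norm_num
    · ext; norm_num
  have h3 : ν.map (fun x => -1 * x + 2*μ) = ν := by
    have hmm := Measure.map_map (μ := ν) (g := fun x : ℝ => x + 2*μ)
      (f := fun x : ℝ => -1 * x) (by fun_prop) (by fun_prop)
    have hc : ((fun x : ℝ => x + 2*μ) ∘ (fun x : ℝ => -1 * x)) = fun x : ℝ => -1 * x + 2*μ := by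
      ext x; simp
    rw [hc] at hmm
    rw [← hmm, h1, gaussianReal_map_add_const, hν]
    ring_nf
  have h4 : ν (Set.Ioi μ) = ν (Set.Iio μ) := by
    conv_lhs => rw [← h3]
    rw [Measure.map_apply (f := fun x : ℝ => -1 * x + 2*μ) (by fun_prop) measurableSet_Ioi]
    congr 1
    ext x
    simp only [Set.mem_preimage, Set.mem_Ioi, Set.mem_Iio]
    constructor <;> intro h <;> nlinarith [h]
  have h5 : ν {μ} = 0 := by
    refine gaussianReal_absolutelyContinuous μ one_ne_zero ?_
    simp
  have h6 : ν (Set.Ioi μ) + ν (Set.Iio μ) = 1 := by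
    have hd : Disjoint (Set.Ioi μ) (Set.Iio μ) := Set.disjoint_left.mpr
      (fun x hx hx' => absurd (lt_trans (Set.mem_Iio.mp hx') (Set.mem_Ioi.mp hx)) (lt_irrefl _))
    rw [← measure_union hd measurableSet_Iio]
    have hu : Set.Ioi μ ∪ Set.Iio μ = {μ}ᶜ := by
      ext x
      simp only [Set.mem_union, Set.mem_Ioi, Set.mem_Iio, Set.mem_compl_iff, Set.mem_singleton_iff]
      rw [or_comm]
      exact lt_or_lt_iff_ne
    rw [hu, measure_compl (measurableSet_singleton μ) (measure_ne_top _ _), h5, measure_univ,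
      tsub_zero]
  rw [← h4, ← two_mul] at h6
  rw [ENNReal.eq_div_iff two_ne_zero ENNReal.ofNat_ne_top]
  exact h6

lemma gaussian_tail_lb {μ : ℝ} (hμ : 0 ≤ μ) :
    ENNReal.ofReal (Real.exp (-μ^2 - 1) / Real.sqrt (2*Real.pi))
      ≤ gaussianReal 0 1 (Set.Ioi μ) := by
  rw [gaussianReal_apply 0 one_ne_zero]
  have step1 : ENNReal.ofReal (Real.exp (-μ^2 - 1) / Real.sqrt (2*Real.pi))
      ≤ ∫⁻ x in Set.Ioc μ (μ+1), gaussianPDF 0 1 x := by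
    have hconst : (∫⁻ _ in Set.Ioc μ (μ+1),
        ENNReal.ofReal (Real.exp (-μ^2 - 1) / Real.sqrt (2*Real.pi)) ∂volume)
        = ENNReal.ofReal (Real.exp (-μ^2 - 1) / Real.sqrt (2*Real.pi)) := by
      rw [setLIntegral_const, Real.volume_Ioc]
      norm_num
    rw [← hconst]
    refine setLIntegral_mono' measurableSet_Ioc (fun x hx => ?_)
    rw [gaussianPDF]
    refine ENNReal.ofReal_le_ofReal ?_
    rw [gaussianPDFReal]
    rw [div_eq_inv_mul]
    push_cast
    rw [mul_one, mul_one]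
    rw [sub_zero]
    gcongr
    obtain ⟨hx1, hx2⟩ := hx
    have hx0 : 0 ≤ x := le_trans hμ hx1.le
    have h2 : x^2 ≤ (μ+1)^2 := by nlinarith
    nlinarith [sq_nonneg (μ-1)]
  exact step1.trans (lintegral_mono' (Measure.restrict_mono Set.Ioc_subset_Ioi_self le_rfl) le_rfl)

/-- Part (b) of the main theorem: if `L M / M → 0`, then the probability
that the largest noise variable `S₁ = max_i W i` exceeds the smallest signal variable
`B_{L M} = min_j Y j` tends to `1` as `M → ∞`. -/
theorem ml_sync_misses_a_path
    (k : ℝ) (hk : 0 < k)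
    (L : ℕ → ℕ) (hL1 : ∀ M, 1 ≤ L M) (hLM : ∀ M, L M ≤ M)
    (hLinf : Tendsto (fun M => (L M : ℝ)) atTop atTop)
    (hLlin : Tendsto (fun M => (L M : ℝ) / M) atTop (nhds 0))
    (Ω : ℕ → Type) (mΩ : ∀ M, MeasurableSpace (Ω M))
    (P : ∀ M, Measure (Ω M)) (hP : ∀ M, IsProbabilityMeasure (P M))
    (Y : ∀ M, Fin (L M) → Ω M → ℝ) (W : ∀ M, Fin (M - L M) → Ω M → ℝ)
    (hindep : ∀ M, iIndepFun
      (Sum.elim (Y M) (W M) : Fin (L M) ⊕ Fin (M - L M) → Ω M → ℝ) (P M))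
    (hY : ∀ M i, Measure.map (Y M i) (P M)
      = gaussianReal (Real.sqrt (k * Real.log M / L M)) 1)
    (hW : ∀ M i, Measure.map (W M i) (P M) = gaussianReal 0 1) :
    Tendsto (fun M => P M {ω | (⨅ j, Y M j ω) < ⨆ i, W M i ω}) atTop (nhds 1) := by
  haveI := hP
  set μM : ℕ → ℝ := fun M => Real.sqrt (k * Real.log M / L M) with hμM
  have hμM0 : ∀ M, 0 ≤ μM M := fun M => Real.sqrt_nonneg _
  set a : ℕ → ℝ≥0∞ := fun M => P M (⋂ j, Y M j ⁻¹' Set.Ioi (μM M)) with ha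
  set b : ℕ → ℝ≥0∞ := fun M => P M (⋂ i, W M i ⁻¹' Set.Iic (μM M)) with hb
  -- measurability
  have hYae : ∀ M j, AEMeasurable (Y M j) (P M) := fun M j =>
    aemeasurable_of_map_neZero (by rw [hY M j]; infer_instance)
  have hWae : ∀ M i, AEMeasurable (W M i) (P M) := fun M i =>
    aemeasurable_of_map_neZero (by rw [hW M i]; infer_instance)
  -- key inequality
  have key : ∀ M, 1 ≤ a M + b M + P M {ω | (⨅ j, Y M j ω) < ⨆ i, W M i ω} := by
    intro M
    have hsub : (Set.univ : Set (Ω M)) ⊆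
        (⋂ j, Y M j ⁻¹' Set.Ioi (μM M)) ∪ ((⋂ i, W M i ⁻¹' Set.Iic (μM M)) ∪
          {ω | (⨅ j, Y M j ω) < ⨆ i, W M i ω}) := by
      intro ω _
      by_cases hA : ω ∈ ⋂ j, Y M j ⁻¹' Set.Ioi (μM M)
      · exact Set.mem_union_left _ hA
      by_cases hB : ω ∈ ⋂ i, W M i ⁻¹' Set.Iic (μM M)
      · exact Set.mem_union_right _ (Set.mem_union_left _ hB)
      refine Set.mem_union_right _ (Set.mem_union_right _ ?_)
      simp only [Set.mem_iInter, Set.mem_preimage, Set.mem_Ioi, not_forall, not_lt] at hA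
      simp only [Set.mem_iInter, Set.mem_preimage, Set.mem_Iic, not_forall, not_le] at hB
      obtain ⟨j, hj⟩ := hA
      obtain ⟨i, hi⟩ := hB
      have h1 : (⨅ j', Y M j' ω) ≤ μM M :=
        le_trans (ciInf_le (Set.Finite.bddBelow (Set.finite_range _)) j) hj
      have h2 : μM M < ⨆ i', W M i' ω :=
        lt_of_lt_of_le hi (le_ciSup (f := fun i' => W M i' ω)
          (Set.Finite.bddAbove (Set.finite_range _)) i)
      exact lt_of_le_of_lt h1 h2
    calc (1 : ℝ≥0∞) = P M Set.univ := (measure_univ).symm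
      _ ≤ P M ((⋂ j, Y M j ⁻¹' Set.Ioi (μM M)) ∪ ((⋂ i, W M i ⁻¹' Set.Iic (μM M)) ∪
          {ω | (⨅ j, Y M j ω) < ⨆ i, W M i ω})) := measure_mono hsub
      _ ≤ a M + P M ((⋂ i, W M i ⁻¹' Set.Iic (μM M)) ∪
          {ω | (⨅ j, Y M j ω) < ⨆ i, W M i ω}) := measure_union_le _ _
      _ ≤ a M + (b M + P M {ω | (⨅ j, Y M j ω) < ⨆ i, W M i ω}) := by
          gcongr; exact measure_union_le _ _
      _ = a M + b M + P M {ω | (⨅ j, Y M j ω) < ⨆ i, W M i ω} := by ring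
  -- a M = (1/2)^(L M)
  have ha_eq : ∀ M, a M = (1/2 : ℝ≥0∞) ^ (L M) := by
    intro M
    set s : Fin (L M) ⊕ Fin (M - L M) → Set (Ω M) :=
      Sum.elim (fun j => Y M j ⁻¹' Set.Ioi (μM M)) (fun _ => Set.univ) with hs
    have hmeas : ∀ i, MeasurableSet[MeasurableSpace.comap
        (Sum.elim (Y M) (W M) i) inferInstance] (s i) := by
      rintro (j | i)
      · exact ⟨Set.Ioi (μM M), measurableSet_Ioi, rfl⟩
      · exact ⟨Set.univ, MeasurableSet.univ, by simp [hs]⟩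
    have hInter : (⋂ i, s i) = ⋂ j, Y M j ⁻¹' Set.Ioi (μM M) := by
      ext ω
      simp only [Set.mem_iInter, Sum.forall, hs, Sum.elim_inl, Sum.elim_inr, Set.mem_univ,
        and_true, implies_true]
    have := (hindep M).meas_iInter hmeas
    rw [hInter] at this
    rw [ha]
    simp only
    rw [this, Fintype.prod_sum_type]
    have hone : ∀ i : Fin (M - L M), P M (s (Sum.inr i)) = 1 := by
      intro i
      have hsu : s (Sum.inr i) = Set.univ := rfl
      rw [hsu]; exact measure_univ
    have hhalf : ∀ j : Fin (L M), P M (s (Sum.inl j)) = 1/2 := by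
      intro j
      have : P M (Y M j ⁻¹' Set.Ioi (μM M)) = (Measure.map (Y M j) (P M)) (Set.Ioi (μM M)) :=
        (Measure.map_apply_of_aemeasurable (hYae M j) measurableSet_Ioi).symm
      simp only [hs, Sum.elim_inl]
      rw [this, hY M j, gaussian_Ioi_self]
    simp only [hone, hhalf, Finset.prod_const, Finset.card_univ, Fintype.card_fin, one_pow,
      mul_one]
  -- b M = q^(M - L M)
  have hb_eq : ∀ M, b M = (gaussianReal 0 1 (Set.Iic (μM M))) ^ (M - L M) := by
    intro M
    set s : Fin (L M) ⊕ Fin (M - L M) → Set (Ω M) :=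
      Sum.elim (fun _ => Set.univ) (fun i => W M i ⁻¹' Set.Iic (μM M)) with hs
    have hmeas : ∀ i, MeasurableSet[MeasurableSpace.comap
        (Sum.elim (Y M) (W M) i) inferInstance] (s i) := by
      rintro (j | i)
      · exact ⟨Set.univ, MeasurableSet.univ, by simp [hs]⟩
      · exact ⟨Set.Iic (μM M), measurableSet_Iic, rfl⟩
    have hInter : (⋂ i, s i) = ⋂ i, W M i ⁻¹' Set.Iic (μM M) := by
      ext ω
      simp only [Set.mem_iInter, Sum.forall, hs, Sum.elim_inl, Sum.elim_inr, Set.mem_univ,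
        true_and, implies_true]
    have := (hindep M).meas_iInter hmeas
    rw [hInter] at this
    rw [hb]
    simp only
    rw [this, Fintype.prod_sum_type]
    have hone : ∀ j : Fin (L M), P M (s (Sum.inl j)) = 1 := by
      intro j
      have hsu : s (Sum.inl j) = Set.univ := rfl
      rw [hsu]; exact measure_univ
    have hq : ∀ i : Fin (M - L M), P M (s (Sum.inr i)) = gaussianReal 0 1 (Set.Iic (μM M)) := by
      intro i
      have : P M (W M i ⁻¹' Set.Iic (μM M)) = (Measure.map (W M i) (P M)) (Set.Iic (μM M)) :=
        (Measure.map_apply_of_aemeasurable (hWae M i) measurableSet_Iic).symm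
      simp only [hs, Sum.elim_inr]
      rw [this, hW M i]
    simp only [hone, hq, Finset.prod_const, Finset.card_univ, Fintype.card_fin, one_pow,
      one_mul]
  -- a M → 0
  have haten : Tendsto a atTop (nhds 0) := by
    have hLnat : Tendsto L atTop atTop := tendsto_natCast_atTop_iff.mp hLinf
    have := (ENNReal.tendsto_pow_atTop_nhds_zero_of_lt_one
      (by norm_num : (1/2 : ℝ≥0∞) < 1)).comp hLnat
    simpa [ha_eq] using (funext ha_eq : a = _) ▸ this
  -- b M → 0
  have hbten : Tendsto b atTop (nhds 0) := by
    set p : ℕ → ℝ := fun M => Real.exp (-(μM M)^2 - 1) / Real.sqrt (2*Real.pi) with hp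
    have hp0 : ∀ M, 0 ≤ p M := fun M => by positivity
    have hqle : ∀ M, gaussianReal 0 1 (Set.Iic (μM M)) ≤ ENNReal.ofReal (Real.exp (-(p M))) := by
      intro M
      have hcompl : gaussianReal 0 1 (Set.Iic (μM M))
          = 1 - gaussianReal 0 1 (Set.Ioi (μM M)) := by
        rw [← Set.compl_Ioi, measure_compl measurableSet_Ioi (measure_ne_top _ _), measure_univ]
      rw [hcompl]
      calc 1 - gaussianReal 0 1 (Set.Ioi (μM M))
          ≤ 1 - ENNReal.ofReal (p M) := tsub_le_tsub_left (gaussian_tail_lb (hμM0 M)) 1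
        _ = ENNReal.ofReal (1 - p M) := by
            rw [ENNReal.ofReal_sub 1 (hp0 M), ENNReal.ofReal_one]
        _ ≤ ENNReal.ofReal (Real.exp (-(p M))) := by
            refine ENNReal.ofReal_le_ofReal ?_
            have := Real.add_one_le_exp (-(p M))
            linarith
    have hble : ∀ M, b M ≤ ENNReal.ofReal (Real.exp (-(((M - L M : ℕ) : ℝ) * p M))) := by
      intro M
      rw [hb_eq M]
      calc (gaussianReal 0 1 (Set.Iic (μM M))) ^ (M - L M)
          ≤ (ENNReal.ofReal (Real.exp (-(p M)))) ^ (M - L M) := pow_le_pow_left' (hqle M) _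
        _ = ENNReal.ofReal ((Real.exp (-(p M))) ^ (M - L M)) :=
            (ENNReal.ofReal_pow (Real.exp_nonneg _) _).symm
        _ = ENNReal.ofReal (Real.exp (-(((M - L M : ℕ) : ℝ) * p M))) := by
            rw [← Real.exp_nat_mul]
            ring_nf
    -- n * p → ∞
    have hnp : Tendsto (fun M => ((M - L M : ℕ) : ℝ) * p M) atTop atTop := by
      set C : ℝ := 1 / (2 * Real.exp 1 * Real.sqrt (2*Real.pi)) with hC
      have hCpos : 0 < C := by positivity
      have hlb : ∀ᶠ M : ℕ in atTop, C * Real.exp (Real.log M / 2)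
          ≤ ((M - L M : ℕ) : ℝ) * p M := by
        filter_upwards [eventually_ge_atTop 1, hLlin.eventually (eventually_le_nhds
          (by norm_num : (0:ℝ) < 1/2)), hLinf.eventually_ge_atTop (2*k)] with M hM1 hM2 hM3
        have hm1 : (1:ℝ) ≤ (M:ℝ) := by exact_mod_cast hM1
        have hmpos : (0:ℝ) < M := by linarith
        have hlog0 : 0 ≤ Real.log M := Real.log_nonneg hm1
        have hLpos : (0:ℝ) < L M := by
          have := hL1 M; positivity
        have hμsq : (μM M)^2 = k * Real.log M / L M := by
          rw [hμM]
          rw [Real.sq_sqrt]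
          positivity
        have hcast : ((M - L M : ℕ) : ℝ) = (M:ℝ) - L M := by
          rw [Nat.cast_sub (hLM M)]
        have hn2 : (M:ℝ)/2 ≤ ((M - L M : ℕ) : ℝ) := by
          rw [hcast]
          rw [div_le_iff₀ hmpos] at hM2
          linarith
        have harg : Real.log M / 2 ≤ -(k * Real.log M / L M) + Real.log M := by
          have h1 : k * Real.log M / L M ≤ Real.log M / 2 := by
            rw [div_le_div_iff₀ hLpos (by norm_num : (0:ℝ) < 2)]
            nlinarith
          linarith
        have hexp : Real.exp (Real.log M / 2)
            ≤ Real.exp (-(k * Real.log M / L M)) * M := by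
          calc Real.exp (Real.log M / 2)
              ≤ Real.exp (-(k * Real.log M / L M) + Real.log M) := Real.exp_le_exp.mpr harg
            _ = Real.exp (-(k * Real.log M / L M)) * M := by
                rw [Real.exp_add, Real.exp_log hmpos]
        have hpval : p M = Real.exp (-(k * Real.log M / L M)) / Real.exp 1
            / Real.sqrt (2*Real.pi) := by
          rw [hp]
          simp only
          rw [hμsq, Real.exp_sub, div_div]
        calc C * Real.exp (Real.log M / 2)
            ≤ C * (Real.exp (-(k * Real.log M / L M)) * M) := by
              exact mul_le_mul_of_nonneg_left hexp hCpos.le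
          _ ≤ ((M - L M : ℕ) : ℝ) * p M := by
              have hsp : (0:ℝ) < Real.sqrt (2*Real.pi) := by positivity
              have he : (0:ℝ) < Real.exp 1 := Real.exp_pos 1
              have hex : (0:ℝ) < Real.exp (-(k * Real.log M / L M)) := Real.exp_pos _
              rw [hpval, hC]
              rw [div_mul_eq_mul_div, one_mul, div_le_iff₀ (by positivity)]
              have heq : ((M - L M : ℕ) : ℝ) * (Real.exp (-(k * Real.log M / L M)) / Real.exp 1
                  / Real.sqrt (2*Real.pi)) * (2 * Real.exp 1 * Real.sqrt (2*Real.pi))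
                  = 2 * ((M - L M : ℕ) : ℝ) * Real.exp (-(k * Real.log M / L M)) := by
                field_simp
              rw [heq]
              nlinarith [hn2, hex.le]
      refine tendsto_atTop_mono' atTop hlb ?_
      refine Tendsto.const_mul_atTop hCpos ?_
      refine Real.tendsto_exp_atTop.comp ?_
      refine Tendsto.atTop_div_const (by norm_num : (0:ℝ) < 2) ?_
      exact Real.tendsto_log_atTop.comp tendsto_natCast_atTop_atTop
    have hupper : Tendsto (fun M => ENNReal.ofReal
        (Real.exp (-(((M - L M : ℕ) : ℝ) * p M)))) atTop (nhds 0) := by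
      have h0 : Tendsto (fun M => Real.exp (-(((M - L M : ℕ) : ℝ) * p M))) atTop (nhds 0) :=
        Real.tendsto_exp_atBot.comp (tendsto_neg_atTop_atBot.comp hnp)
      have := ENNReal.tendsto_ofReal h0
      simpa using this
    exact tendsto_of_tendsto_of_tendsto_of_le_of_le tendsto_const_nhds hupper
      (fun M => zero_le) hble
  -- conclude
  have hlow : ∀ M, 1 - (a M + b M) ≤ P M {ω | (⨅ j, Y M j ω) < ⨆ i, W M i ω} := by
    intro M
    rw [tsub_le_iff_right]
    calc (1:ℝ≥0∞) ≤ a M + b M + P M {ω | (⨅ j, Y M j ω) < ⨆ i, W M i ω} := key M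
      _ = P M {ω | (⨅ j, Y M j ω) < ⨆ i, W M i ω} + (a M + b M) := by ring
  have hup : ∀ M, P M {ω | (⨅ j, Y M j ω) < ⨆ i, W M i ω} ≤ 1 := fun M => prob_le_one
  have hlowten : Tendsto (fun M => 1 - (a M + b M)) atTop (nhds 1) := by
    have := ENNReal.Tendsto.sub (tendsto_const_nhds (x := (1:ℝ≥0∞)))
      (haten.add hbten) (Or.inl ENNReal.one_ne_top)
    simpa using this
  exact tendsto_of_tendsto_of_tendsto_of_le_of_le hlowten tendsto_const_nhds hlow hup
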